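/- Let G be a finite group and M a subgroup of G of odd order. Let e = Σ_{g ∈ M} g ∈ F₂[G]. Then e² = e and ê = e, so C = e·F₂[G] is an LCD group code. -/

import Mathlib

theorem sum_of_odd_subgroup_is_lcd_idempotent {G : Type*} [Group G] [Fintype G]
    [DecidableEq G] (M : Subgroup G) [DecidablePred (· ∈ M)]
    (hM : Odd (Nat.card M))
    (e : MonoidAlgebra (ZMod 2) G)
    (he : e = ∑ g ∈ Finset.univ.filter (· ∈ M), MonoidAlgebra.of (ZMod 2) G g) :
    e * e = e ∧ Finsupp.mapDomain (fun g : G => g⁻¹) e.coeff = e.coeff := by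
  classical
  set S := Finset.univ.filter (· ∈ M) with hS
  have hmem : ∀ g, g ∈ S ↔ g ∈ M := by
    intro g; simp [hS]
  have hcard : S.card = Nat.card M := by
    rw [Nat.card_eq_fintype_card, Fintype.card_subtype]
  have htwo : ∀ x : MonoidAlgebra (ZMod 2) G, x + x = 0 := by
    intro x
    have : x + x = (2 : ZMod 2) • x := by rw [two_smul]
    rw [this, show (2 : ZMod 2) = 0 from rfl, zero_smul]
  constructor
  · rw [he, Finset.sum_mul_sum]
    have key : ∀ g ∈ S, ∑ h ∈ S, MonoidAlgebra.of (ZMod 2) G g *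
        MonoidAlgebra.of (ZMod 2) G h = ∑ k ∈ S, MonoidAlgebra.of (ZMod 2) G k := by
      intro g hg
      rw [← Finset.mul_sum] at *
      have : ∑ h ∈ S, MonoidAlgebra.of (ZMod 2) G g * MonoidAlgebra.of (ZMod 2) G h
          = ∑ k ∈ S, MonoidAlgebra.of (ZMod 2) G k := by
        apply Finset.sum_nbij' (fun h => g * h) (fun k => g⁻¹ * k)
        · intro h hh
          rw [hmem] at *
          exact M.mul_mem hg hh
        · intro k hk
          rw [hmem] at *
          exact M.mul_mem (M.inv_mem hg) hk
        · intro h _; group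
        · intro k _; group
        · intro h _
          exact (map_mul (MonoidAlgebra.of (ZMod 2) G) g h).symm
      simpa [Finset.mul_sum] using this
    rw [Finset.sum_congr rfl key, Finset.sum_const, hcard]
    obtain ⟨k, hk⟩ := hM
    rw [hk]
    generalize (∑ k ∈ S, MonoidAlgebra.of (ZMod 2) G k) = x
    rw [add_nsmul, one_nsmul, show 2 * k = k * 2 by ring, mul_nsmul, two_nsmul]
    simp [htwo]
  · rw [he, MonoidAlgebra.coeff_sum, Finsupp.mapDomain_finset_sum]
    apply Finset.sum_nbij' (fun h => h⁻¹) (fun h => h⁻¹)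
    · intro h hh; rw [hmem] at *; exact M.inv_mem hh
    · intro h hh; rw [hmem] at *; exact M.inv_mem hh
    · intro h _; group
    · intro h _; group
    · intro h _
      show Finsupp.mapDomain _ (Finsupp.single h 1) = Finsupp.single h⁻¹ 1
      rw [Finsupp.mapDomain_single]
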